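/- Let m_{(p,0)}(ξ) = (1/√m) e^{2πi(s_{p,0},ξ)} − conj(μ(M*ξ)) m̃_0(ξ), where μ is the polyphase component of an H-symmetric mask m_0 corresponding to digit s_{p,0}, and m̃_0 is H-symmetric with respect to c. If F ∈ H_{p,0} (the stabilizer of the coset ⟨s_{p,0}⟩), then m_{(p,0)}(F*ξ) = e^{2πi(Fs_{p,0} − s_{p,0}, ξ)} m_{(p,0)}(ξ); that is, m_{(p,0)} is H_{p,0}-symmetric with respect to the center s_{p,0}. -/
import Mathlib


open Matrix BigOperators

def matR {d : ℕ} (A : Matrix (Fin d) (Fin d) ℤ) : Matrix (Fin d) (Fin d) ℝ :=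
  A.map Int.cast

def intc {d : ℕ} (k : Fin d → ℤ) : Fin d → ℝ := fun i => (k i : ℝ)

noncomputable def e2pi (x : ℝ) : ℂ := Complex.exp (2 * Real.pi * Complex.I * x)

def dotv {d : ℕ} (x y : Fin d → ℝ) : ℝ := ∑ i, x i * y i

def IsTrigPoly {d : ℕ} (f : (Fin d → ℝ) → ℂ) : Prop :=
  ∃ h : (Fin d → ℤ) →₀ ℂ, ∀ ξ, f ξ = ∑ k ∈ h.support, h k * e2pi (dotv (intc k) ξ)


lemma e2pi_add (x y : ℝ) : e2pi (x + y) = e2pi x * e2pi y := by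
  simp [e2pi, mul_add, Complex.exp_add]

lemma e2pi_neg_mul (x : ℝ) : e2pi (-x) * e2pi x = 1 := by
  rw [← e2pi_add]; simp [e2pi]

lemma conj_e2pi (x : ℝ) : (starRingEnd ℂ) (e2pi x) = e2pi (-x) := by
  unfold e2pi
  rw [← Complex.exp_conj]
  have h : (2 * Real.pi * Complex.I * (x:ℂ)) = ((2*Real.pi*x : ℝ) : ℂ) * Complex.I := by
    push_cast; ring
  rw [h, _root_.map_mul, Complex.conj_ofReal, Complex.conj_I]
  congr 1
  push_cast; ring

lemma dotv_sub {d : ℕ} (x y z : Fin d → ℝ) :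
    dotv (x - y) z = dotv x z - dotv y z := by
  simp [dotv, sub_mul, Finset.sum_sub_distrib]

lemma dotv_add {d : ℕ} (x y z : Fin d → ℝ) :
    dotv (x + y) z = dotv x z + dotv y z := by
  simp [dotv, add_mul, Finset.sum_add_distrib]

lemma dotv_eq {d : ℕ} (x y : Fin d → ℝ) : dotv x y = x ⬝ᵥ y := rfl

lemma dotv_mulVec {d : ℕ} (A : Matrix (Fin d) (Fin d) ℝ) (x y : Fin d → ℝ) :
    dotv (A.mulVec x) y = dotv x (Aᵀ.mulVec y) := by
  simp [dotv_eq, Matrix.dotProduct_mulVec, Matrix.mulVec_transpose,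
    dotProduct_comm]

/-- the wavelet mask
`m_{(p,0)}(ξ) = (1/√m) e^{2πi(s_{p,0},ξ)} − conj(μ(M*ξ)) m̃_0(ξ)` satisfies
`m_{(p,0)}(F*ξ) = e^{2πi(Fs_{p,0}−s_{p,0},ξ)} m_{(p,0)}(ξ)` for every `F` in the
stabilizer `H_{p,0}`, i.e. it is `H_{p,0}`-symmetric with center `s_{p,0}`. -/
theorem wavelet_mask_stabilizer_symmetry {d m : ℕ} (hm : 0 < m)
    (M F : Matrix (Fin d) (Fin d) ℤ) (hdet : (matR M).det ≠ 0)
    (hF : F.det = 1 ∨ F.det = -1)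
    (c : Fin d → ℝ) (s r : Fin d → ℤ)
    -- digit relation  F s_{p,0} = M r_{p,0}^F + s_{p,0} + Fc − c
    (hdig : (matR F).mulVec (intc s)
      = (matR M).mulVec (intc r) + intc s + (matR F).mulVec c - c)
    (μ mt0 mp0 : (Fin d → ℝ) → ℂ)
    (hμtrig : IsTrigPoly μ) (hmt0trig : IsTrigPoly mt0)
    -- polyphase symmetry of the component μ = μ_{0,p,0}
    (hμ : ∀ ξ, μ ξ = e2pi (dotv (intc r) ξ)
      * μ (((matR M)⁻¹ * matR F * matR M)ᵀ.mulVec ξ))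
    -- H-symmetry of m̃0 at F
    (hmt0 : ∀ ξ, mt0 ξ = e2pi (dotv (c - (matR F).mulVec c) ξ)
      * mt0 ((matR F)ᵀ.mulVec ξ))
    -- definition of the wavelet mask m_{(p,0)}
    (hmp0 : ∀ ξ, mp0 ξ = ((Real.sqrt m : ℂ))⁻¹ * e2pi (dotv (intc s) ξ)
      - (starRingEnd ℂ) (μ ((matR M)ᵀ.mulVec ξ)) * mt0 ξ) :
    ∀ ξ : Fin d → ℝ, mp0 ((matR F)ᵀ.mulVec ξ)
      = e2pi (dotv ((matR F).mulVec (intc s) - intc s) ξ) * mp0 ξ := by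
  intro ξ
  have hinv : matR M * (matR M)⁻¹ = 1 :=
    Matrix.mul_nonsing_inv _ (isUnit_iff_ne_zero.mpr hdet)
  -- rewrite μ at Mᵀξ
  have hμ' : μ ((matR M)ᵀ.mulVec ((matR F)ᵀ.mulVec ξ))
      = e2pi (-(dotv (intc r) ((matR M)ᵀ.mulVec ξ))) * μ ((matR M)ᵀ.mulVec ξ) := by
    have h1 := hμ ((matR M)ᵀ.mulVec ξ)
    have h2 : (((matR M)⁻¹ * matR F * matR M)ᵀ).mulVec ((matR M)ᵀ.mulVec ξ)
        = (matR M)ᵀ.mulVec ((matR F)ᵀ.mulVec ξ) := by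
      rw [Matrix.mulVec_mulVec, Matrix.mulVec_mulVec, ← Matrix.transpose_mul,
        ← Matrix.transpose_mul]
      congr 2
      rw [← mul_assoc, ← mul_assoc, hinv, one_mul]
    rw [h2] at h1
    rw [h1, ← mul_assoc, e2pi_neg_mul, one_mul]
  have hmt0' : mt0 ((matR F)ᵀ.mulVec ξ)
      = e2pi (-(dotv (c - (matR F).mulVec c) ξ)) * mt0 ξ := by
    rw [hmt0 ξ, ← mul_assoc, e2pi_neg_mul, one_mul]
  rw [hmp0, hmp0, hμ', hmt0', _root_.map_mul, conj_e2pi, neg_neg]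
  have hsd : dotv (intc s) ((matR F)ᵀ.mulVec ξ)
      = dotv ((matR F).mulVec (intc s) - intc s) ξ + dotv (intc s) ξ := by
    rw [← dotv_mulVec, dotv_sub]; ring
  have hkey : dotv (intc r) ((matR M)ᵀ.mulVec ξ)
      - dotv (c - (matR F).mulVec c) ξ
      = dotv ((matR F).mulVec (intc s) - intc s) ξ := by
    have hd := congrArg (fun v => dotv v ξ) hdig
    simp only [dotv_add, dotv_sub] at hd
    rw [← dotv_mulVec, dotv_sub, dotv_sub]
    linarith
  have h3 : e2pi (dotv (intc r) ((matR M)ᵀ.mulVec ξ))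
      * e2pi (-(dotv (c - (matR F).mulVec c) ξ))
      = e2pi (dotv ((matR F).mulVec (intc s) - intc s) ξ) := by
    rw [← e2pi_add]
    have h4 : dotv (intc r) ((matR M)ᵀ.mulVec ξ)
        + -(dotv (c - (matR F).mulVec c) ξ)
        = dotv ((matR F).mulVec (intc s) - intc s) ξ := by linarith
    rw [h4]
  rw [hsd, e2pi_add]
  linear_combination
    (-((starRingEnd ℂ) (μ ((matR M)ᵀ.mulVec ξ)) * mt0 ξ)) * h3
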